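/- Let λ be a singular cardinal, let D be an ultrafilter on κ, and let ⟨κ_i : i < κ⟩ be a sequence of regular cardinals such that for every β < λ the set {i < κ : β < κ_i} belongs to D. Then the cardinality of ∏_{i<κ} κ_i / D is at least λ⁺. -/

import Mathlib

universe u

open Cardinal Set

/-- Members of the product `∏_{i} λ_i`: functions choosing an ordinal below `(λ i).ord`
for every index `i`. -/
def ProdFun {ι : Type u} (lam : ι → Cardinal.{u}) : Type (u + 1) :=
  {f : ι → Ordinal.{u} // ∀ i, f i < (lam i).ord}

/-- `D`-equality of members of the product. -/
def prodEquiv {ι : Type u} (D : Ultrafilter ι) (lam : ι → Cardinal.{u})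
    (f g : ProdFun lam) : Prop :=
  {i | f.1 i = g.1 i} ∈ D

/-- The reduced product `∏_{i} λ_i / D`. -/
def ProdQuot {ι : Type u} (D : Ultrafilter ι) (lam : ι → Cardinal.{u}) : Type (u + 1) :=
  Quot (prodEquiv D lam)

/-- The cardinality of the reduced product `∏_{i} λ_i / D`. -/
noncomputable def prodCard {ι : Type u} (D : Ultrafilter ι) (lam : ι → Cardinal.{u}) :
    Cardinal.{u + 1} :=
  Cardinal.mk (ProdQuot D lam)

/-- `μ = lim_D ⟨λ_i : i < κ⟩` : for every `β < μ`, the set `{i : β < λ_i ≤ μ}` is in `D`. -/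
def IsLimD {ι : Type u} (D : Ultrafilter ι) (lam : ι → Cardinal.{u}) (μ : Cardinal.{u}) :
    Prop :=
  ∀ β < μ, {i | β < lam i ∧ lam i ≤ μ} ∈ D

theorem prodEquiv_equivalence {ι : Type u} (D : Ultrafilter ι) (lam : ι → Cardinal.{u}) :
    Equivalence (prodEquiv D lam) := by
  constructor
  · intro f
    have : {i | f.1 i = f.1 i} = Set.univ := by ext i; simp
    unfold prodEquiv
    rw [this]
    exact Filter.univ_mem
  · intro f g h
    have : {i | f.1 i = g.1 i} = {i | g.1 i = f.1 i} := by ext i; exact eq_comm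
    unfold prodEquiv at *
    rwa [this] at h
  · intro f g h hfg hgh
    unfold prodEquiv at *
    have := Filter.inter_mem hfg hgh
    refine Filter.mem_of_superset this ?_
    intro i hi
    exact hi.1.trans hi.2

theorem stmt_18 {ι : Type u} (κ la : Cardinal.{u}) (hι : #ι = κ)
    (hla : ℵ₀ ≤ la) (hsing : ¬ la.IsRegular)
    (D : Ultrafilter ι) (kap : ι → Cardinal.{u}) (hreg : ∀ i, (kap i).IsRegular)
    (hD : ∀ β < la, {i | β < kap i} ∈ D) :
    Cardinal.lift.{u + 1} (Order.succ la) ≤ prodCard D kap := by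
  by_contra hcon
  rw [not_le, Cardinal.lift_succ, Order.lt_succ_iff] at hcon
  -- basic facts
  have hθla : la.ord.cof < la := by
    refine lt_of_not_ge fun h => hsing ⟨hla, h⟩
  have hlimord : ∀ i, Order.IsSuccLimit ((kap i).ord) := fun i => Cardinal.isSuccLimit_ord (hreg i).1
  -- la is a limit cardinal
  have hlim : ∀ β < la, Order.succ β < la := by
    intro β hβ
    rcases lt_or_eq_of_le (Order.succ_le_of_lt hβ) with h | h
    · exact h
    · exfalso
      by_cases hb : ℵ₀ ≤ β
      · exact hsing (h ▸ Cardinal.isRegular_succ hb)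
      · have h1 : Order.succ β ≤ ℵ₀ := Order.succ_le_of_lt (lt_of_not_ge hb)
        have : la = ℵ₀ := le_antisymm (h ▸ h1) hla
        exact hsing (this ▸ Cardinal.isRegular_aleph0)
  -- cofinal family of cardinals
  obtain ⟨T, f, hlsub, hT⟩ := Ordinal.exists_lsub_cof la.ord
  set g : T → Cardinal.{u} := fun t => (f t).card with hg_def
  have hg : ∀ t, g t < la := by
    intro t
    have : f t < la.ord := by rw [← hlsub]; exact Ordinal.lt_lsub f t
    exact Cardinal.lt_ord.mp this
  have hcof : ∀ β < la, ∃ t, β ≤ g t := by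
    intro β hβ
    have : β.ord < Ordinal.lsub f := by rw [hlsub]; exact Cardinal.ord_lt_ord.2 hβ
    obtain ⟨t, ht⟩ := Ordinal.lt_lsub_iff.1 this
    exact ⟨t, by simpa [hg_def] using (Cardinal.card_ord β ▸ Ordinal.card_le_card ht)⟩
  -- la ≤ iSup g
  have hla_le : la ≤ ⨆ t, g t := by
    by_contra h
    rw [not_le] at h
    obtain ⟨t, ht⟩ := hcof _ (hlim _ h)
    exact (Order.lt_succ (⨆ t, g t)).not_ge
      (ht.trans (le_ciSup (Cardinal.bddAbove_range g) t))
  -- the covering type Y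
  let Y : Type (u + 1) := Σ t : T, ULift.{u + 1} (g t).out
  have hY : Cardinal.lift.{u + 1} la ≤ #Y := by
    have h1 : la ≤ Cardinal.sum g := hla_le.trans (Cardinal.iSup_le_sum g)
    have h2 : Cardinal.lift.{u + 1} la ≤ Cardinal.lift.{u + 1} (Cardinal.sum g) :=
      Cardinal.lift_le.2 h1
    rw [Cardinal.lift_sum] at h2
    refine h2.trans_eq ?_
    rw [Cardinal.mk_sigma]
    congr 1
    funext t
    rw [Cardinal.mk_uLift, Cardinal.mk_out]
  -- nonempty quotient
  have hzero : ∀ i, (0 : Ordinal) < (kap i).ord := fun i => (hlimord i).pos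
  let z0 : ProdFun kap := ⟨fun _ => 0, hzero⟩
  have hne : Nonempty (ProdQuot D kap) := ⟨Quot.mk _ z0⟩
  -- surjection from Y onto the quotient
  have hle : #(ProdQuot D kap) ≤ #Y := le_trans hcon hY
  obtain ⟨e⟩ := (Cardinal.le_def _ _).1 hle
  have hsurj : Function.Surjective (Function.invFun e) :=
    Function.invFun_surjective e.injective
  let G : Y → ProdFun kap := fun y => (Function.invFun e y).out
  have hGsurj : ∀ q : ProdQuot D kap, ∃ y, Quot.mk _ (G y) = q := by
    intro q
    obtain ⟨y, hy⟩ := hsurj q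
    exact ⟨y, by rw [← hy]; exact Quot.out_eq _⟩
  -- the sup functions
  set s : T → ι → Ordinal.{u} := fun t i =>
    if g t < kap i then ⨆ z : (g t).out, (G ⟨t, ULift.up z⟩).1 i else 0 with hs_def
  have hslt : ∀ t i, s t i < (kap i).ord := by
    intro t i
    simp only [hs_def]
    by_cases h : g t < kap i
    · rw [if_pos h]
      refine Ordinal.iSup_lt_ord ?_ fun z => (G ⟨t, ULift.up z⟩).2 i
      rw [Cardinal.mk_out, (hreg i).cof_eq]
      exact h
    · rw [if_neg h]; exact hzero i
  have hsge : ∀ t (z : ULift.{u+1} (g t).out) i, g t < kap i →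
      (G ⟨t, z⟩).1 i ≤ s t i := by
    intro t z i h
    simp only [hs_def]
    simp only [if_pos h]
    have := le_ciSup (Ordinal.bddAbove_range fun w : (g t).out => (G ⟨t, ULift.up w⟩).1 i) z.down
    simpa using this
  -- the diagonal function
  have hHbound : ∀ i, (if la.ord.cof < kap i then ⨆ t : T, (s t i + 1) else 0)
      < (kap i).ord := by
    intro i
    by_cases h : la.ord.cof < kap i
    · rw [if_pos h]
      refine Ordinal.iSup_lt_ord ?_ fun t => ?_
      · rw [hT, (hreg i).cof_eq]; exact h
      · rw [Ordinal.add_one_eq_succ]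
        exact (hlimord i).succ_lt (hslt t i)
    · rw [if_neg h]; exact hzero i
  let H : ProdFun kap := ⟨fun i => if la.ord.cof < kap i then ⨆ t : T, (s t i + 1) else 0,
    hHbound⟩
  -- derive the contradiction
  obtain ⟨⟨t, z⟩, hy⟩ := hGsurj (Quot.mk _ H)
  have hequiv : prodEquiv D kap (G ⟨t, z⟩) H :=
    ((prodEquiv_equivalence D kap).eqvGen_iff).1 (Quot.eq.1 hy)
  have hB : {i | g t < kap i} ∩ {i | la.ord.cof < kap i} ∈ D :=
    Filter.inter_mem (hD _ (hg t)) (hD _ hθla)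
  have hmem : ({i | g t < kap i} ∩ {i | la.ord.cof < kap i}) ∩
      {i | (G ⟨t, z⟩).1 i = H.1 i} ∈ D := Filter.inter_mem hB hequiv
  obtain ⟨i, ⟨⟨h1, h2⟩, h3⟩⟩ := Filter.nonempty_of_mem hmem
  have hlt : (G ⟨t, z⟩).1 i < H.1 i := by
    have hH : H.1 i = ⨆ t' : T, (s t' i + 1) := if_pos h2
    have h4 : s t i + 1 ≤ ⨆ t' : T, (s t' i + 1) :=
      le_ciSup (Ordinal.bddAbove_range fun t' : T => s t' i + 1) t
    calc (G ⟨t, z⟩).1 i ≤ s t i := hsge t z i h1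
      _ < s t i + 1 := by rw [Ordinal.add_one_eq_succ]; exact Order.lt_succ _
      _ ≤ H.1 i := hH ▸ h4
  exact hlt.ne h3
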